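/- There is a universal constant C > 0 such that the following holds. Let H be a real Hilbert space, X ⊆ H a compact connected set, x ∈ X and 0 < r < diam X / 2. Then β'_X(x,r) ≤ β_X(x,r) ≤ C·β'_X(x,r)^{1/2}. -/

import Mathlib

open Metric Set MeasureTheory

noncomputable section

/-- `ℓ^∞`, the Banach space of bounded real sequences with the sup norm. -/
abbrev lInf : Type := lp (fun _ : ℕ => ℝ) ⊤

/-- The set of values whose infimum defines `β'_X(x,r)`: for each rectifiable curve
`s : [0,1] → B(x,r)` with `s 0 ≠ s 1`, the quantity
`(ℓ(s) − |s(0)−s(1)| + sup_{z ∈ X ∩ B(x,r)} dist(z, s([0,1]))) / |s(0)−s(1)|`. -/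
def betaPrimeSet {E : Type*} [NormedAddCommGroup E] (X : Set E) (x : E) (r : ℝ) : Set ℝ :=
  { b | ∃ s : ℝ → E, ContinuousOn s (Set.Icc 0 1) ∧
      (∀ t ∈ Set.Icc (0:ℝ) 1, s t ∈ Metric.ball x r) ∧
      s 0 ≠ s 1 ∧ eVariationOn s (Set.Icc 0 1) ≠ ⊤ ∧
      b = ((eVariationOn s (Set.Icc 0 1)).toReal - dist (s 0) (s 1)
          + ⨆ z ∈ X ∩ Metric.ball x r, Metric.infDist z (s '' Set.Icc 0 1)) / dist (s 0) (s 1) }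

/-- `β'_X(x,r)`. -/
def betaPrime {E : Type*} [NormedAddCommGroup E] (X : Set E) (x : E) (r : ℝ) : ℝ :=
  sInf (betaPrimeSet X x r)

/-- The values whose infimum (after multiplying by `1/r`) defines Jones' β-number: for each
affine line `L = {p + t·v : t ∈ ℝ}` (with `v ≠ 0`), the quantity
`sup_{z ∈ X ∩ B(x,r)} dist(z, L) / r`. -/
def jonesBetaSet {H : Type*} [NormedAddCommGroup H] [NormedSpace ℝ H]
    (X : Set H) (x : H) (r : ℝ) : Set ℝ :=
  { b | ∃ p v : H, v ≠ 0 ∧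
      b = (⨆ z ∈ X ∩ Metric.ball x r, Metric.infDist z {y | ∃ t : ℝ, y = p + t • v}) / r }

/-- Jones' β-number `β_X(x,r)`. -/
def jonesBeta {H : Type*} [NormedAddCommGroup H] [NormedSpace ℝ H]
    (X : Set H) (x : H) (r : ℝ) : ℝ :=
  sInf (jonesBetaSet X x r)

section Helpers

variable {H : Type*} [NormedAddCommGroup H] [InnerProductSpace ℝ H]

local notation "⟪" x ", " y "⟫" => @inner ℝ _ _ x y

/-- Pythagoras along a line with unit direction. -/
lemma pythag_line (p u z : H) (hu : ‖u‖ = 1) (t : ℝ) :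
    ‖z - (p + t • u)‖ ^ 2 = ‖z - p - ⟪z - p, u⟫ • u‖ ^ 2 + (⟪z - p, u⟫ - t) ^ 2 := by
  have h1 : z - (p + t • u) = (z - p - ⟪z - p, u⟫ • u) + (⟪z - p, u⟫ - t) • u := by
    module
  rw [h1, norm_add_sq_real]
  have huu : ⟪u, u⟫ = (1:ℝ) := by
    rw [real_inner_self_eq_norm_sq, hu]; norm_num
  have hperp : ⟪z - p - ⟪z - p, u⟫ • u, u⟫ = 0 := by
    rw [inner_sub_left, real_inner_smul_left, huu]; ring
  have horth : ⟪z - p - ⟪z - p, u⟫ • u, (⟪z - p, u⟫ - t) • u⟫ = 0 := by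
    rw [inner_smul_right, hperp, mul_zero]
  rw [horth, norm_smul, hu, mul_one, mul_zero, add_zero, Real.norm_eq_abs, sq_abs]

lemma infDist_line_eq (p u z : H) (hu : ‖u‖ = 1) :
    infDist z {y : H | ∃ t : ℝ, y = p + t • u} = ‖z - p - ⟪z - p, u⟫ • u‖ := by
  apply le_antisymm
  · have : p + ⟪z - p, u⟫ • u ∈ {y : H | ∃ t : ℝ, y = p + t • u} := ⟨_, rfl⟩
    refine le_trans (infDist_le_dist_of_mem this) ?_
    rw [dist_eq_norm]
    apply le_of_eq; congr 1; abel
  · rw [infDist_eq_iInf]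
    have : Nonempty {y : H // y ∈ {y : H | ∃ t : ℝ, y = p + t • u}} := ⟨⟨p + (0:ℝ) • u, ⟨0, rfl⟩⟩⟩
    apply le_ciInf
    rintro ⟨y, t, rfl⟩
    rw [dist_eq_norm]
    have h2 := pythag_line p u z hu t
    nlinarith [norm_nonneg (z - (p + t • u)), norm_nonneg (z - p - ⟪z - p, u⟫ • u), sq_nonneg (⟪z - p, u⟫ - t)]

lemma lineSet_unit (p v : H) (hv : v ≠ 0) :
    {y : H | ∃ t : ℝ, y = p + t • v} = {y : H | ∃ t : ℝ, y = p + t • (‖v‖⁻¹ • v)} := by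
  have hv' : ‖v‖ ≠ 0 := norm_ne_zero_iff.mpr hv
  ext y
  constructor
  · rintro ⟨t, rfl⟩
    exact ⟨t * ‖v‖, by rw [smul_smul]; field_simp⟩
  · rintro ⟨t, rfl⟩
    exact ⟨t * ‖v‖⁻¹, by rw [smul_smul]⟩

lemma lineSet_shift (p u : H) (c : ℝ) :
    {y : H | ∃ t : ℝ, y = p + t • u} = {y : H | ∃ t : ℝ, y = (p + c • u) + t • u} := by
  ext y
  constructor
  · rintro ⟨t, rfl⟩
    exact ⟨t - c, by module⟩
  · rintro ⟨t, rfl⟩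
    exact ⟨c + t, by module⟩

/-- The "ellipse" estimate: a point is within `√((A+B)² - D²)/2` of the line through `a, b`,
where `A, B` are its distances to `a, b` and `D = dist a b`. -/
lemma ellipse_est (a b pt : H) (hab : a ≠ b) :
    infDist pt {y : H | ∃ t : ℝ, y = a + t • (b - a)} ≤
      Real.sqrt ((dist a pt + dist pt b) ^ 2 - dist a b ^ 2) / 2 := by
  set v := b - a with hv
  have hvne : v ≠ 0 := sub_ne_zero.mpr (Ne.symm hab)
  set u : H := ‖v‖⁻¹ • v with hudef
  have hnv : ‖v‖ ≠ 0 := norm_ne_zero_iff.mpr hvne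
  have hu : ‖u‖ = 1 := by
    rw [hudef, norm_smul, norm_inv, norm_norm]
    field_simp
  rw [lineSet_unit a v hvne, ← hudef, infDist_line_eq a u pt hu]
  set α : ℝ := ⟪pt - a, u⟫ with hα
  set h : ℝ := ‖pt - a - α • u‖ with hh
  set D : ℝ := dist a b with hD
  have hDnorm : D = ‖v‖ := by rw [hD, dist_eq_norm, hv]; rw [norm_sub_rev]
  have hb_eq : b = a + D • u := by
    rw [hDnorm, hudef, smul_smul, mul_inv_cancel₀ hnv, one_smul, hv]
    abel
  have hA2 : dist a pt ^ 2 = h ^ 2 + α ^ 2 := by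
    have := pythag_line a u pt hu 0
    rw [dist_comm, dist_eq_norm] at *
    simpa using this
  have hB2 : dist pt b ^ 2 = h ^ 2 + (α - D) ^ 2 := by
    have := pythag_line a u pt hu D
    rw [dist_eq_norm]
    rw [hb_eq]
    exact this
  set A : ℝ := dist a pt
  set B : ℝ := dist pt b
  have hA0 : 0 ≤ A := dist_nonneg
  have hB0 : 0 ≤ B := dist_nonneg
  have hh0 : 0 ≤ h := norm_nonneg _
  -- key: A*B ≥ α*(D-α) + h^2
  have hAB : α * (D - α) + h ^ 2 ≤ A * B := by
    nlinarith [sq_nonneg (h * (α - (D - α))), sq_nonneg (A * B - (α * (D - α) + h ^ 2)),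
      sq_nonneg (A * B + (α * (D - α) + h ^ 2)), mul_nonneg hA0 hB0]
  have hkey : 4 * h ^ 2 ≤ (A + B) ^ 2 - D ^ 2 := by nlinarith
  have h4 : h ≤ Real.sqrt ((A + B) ^ 2 - D ^ 2) / 2 := by
    rw [le_div_iff₀ (by norm_num : (0:ℝ) < 2)]
    have : (h * 2) ^ 2 ≤ (A + B) ^ 2 - D ^ 2 := by nlinarith
    calc h * 2 = Real.sqrt ((h * 2) ^ 2) := by
          rw [Real.sqrt_sq (by linarith)]
      _ ≤ Real.sqrt ((A + B) ^ 2 - D ^ 2) := Real.sqrt_le_sqrt this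
  exact h4
variable {H : Type*} [NormedAddCommGroup H] [InnerProductSpace ℝ H]

lemma segment_dist01 (c w : H) :
    dist ((fun t : ℝ => c + (2 * t - 1) • w) 0) ((fun t : ℝ => c + (2 * t - 1) • w) 1)
      = 2 * ‖w‖ := by
  simp only [dist_eq_norm]
  have : c + (2 * (0:ℝ) - 1) • w - (c + (2 * (1:ℝ) - 1) • w) = (-2 : ℝ) • w := by module
  rw [this, norm_smul]
  simp

lemma segment_variation (c w : H) :
    eVariationOn (fun t : ℝ => c + (2 * t - 1) • w) (Icc 0 1) = ENNReal.ofReal (2 * ‖w‖) := by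
  set s : ℝ → H := fun t => c + (2 * t - 1) • w with hs
  apply le_antisymm
  · set f : ℝ → H := fun θ => c + θ • w with hf
    set g : ℝ → ℝ := fun t => 2 * t - 1 with hg
    have hfg : s = f ∘ g := rfl
    have hlip : LipschitzWith ‖w‖₊ f := by
      apply LipschitzWith.of_dist_le_mul
      intro a b
      simp only [hf, dist_eq_norm]
      have h1 : c + a • w - (c + b • w) = (a - b) • w := by module
      rw [h1, norm_smul, Real.norm_eq_abs, coe_nnnorm, mul_comm]
    have hgvar : eVariationOn g (Icc 0 1) ≤ ENNReal.ofReal 2 := by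
      have hmono : MonotoneOn g (univ : Set ℝ) := by
        intro a _ b _ hab
        simp only [hg]
        linarith
      have := hmono.eVariationOn_le (mem_univ (0:ℝ)) (mem_univ (1:ℝ))
      rw [univ_inter] at this
      convert this using 2
      simp [hg]
    calc eVariationOn s (Icc 0 1) = eVariationOn (f ∘ g) (Icc 0 1) := by rw [hfg]
      _ ≤ ‖w‖₊ * eVariationOn g (Icc 0 1) :=
          hlip.lipschitzOnWith.comp_eVariationOn_le (mapsTo_univ _ _)
      _ ≤ ‖w‖₊ * ENNReal.ofReal 2 := by
          exact mul_le_mul_right hgvar _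
      _ = ENNReal.ofReal (2 * ‖w‖) := by
          rw [← ENNReal.ofReal_coe_nnreal, ← ENNReal.ofReal_mul (by positivity)]
          rw [coe_nnnorm, mul_comm]
  · have h01 : (0:ℝ) ∈ Icc (0:ℝ) 1 := by norm_num
    have h11 : (1:ℝ) ∈ Icc (0:ℝ) 1 := by norm_num
    have := eVariationOn.edist_le s h01 h11
    refine le_trans (le_of_eq ?_) this
    rw [edist_dist, segment_dist01 c w]

lemma segment_mem_betaPrimeSet (X : Set H) (x : H) (r : ℝ) (c w : H) (hw : w ≠ 0)
    (hball : ∀ t ∈ Icc (0:ℝ) 1, c + (2 * t - 1) • w ∈ ball x r) :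
    (⨆ z ∈ X ∩ ball x r, infDist z ((fun t : ℝ => c + (2 * t - 1) • w) '' Icc 0 1)) / (2 * ‖w‖)
      ∈ betaPrimeSet X x r := by
  set s : ℝ → H := fun t => c + (2 * t - 1) • w with hs
  have hwpos : 0 < ‖w‖ := norm_pos_iff.mpr hw
  have hcont : ContinuousOn s (Icc 0 1) := by
    apply Continuous.continuousOn
    fun_prop
  have hne : s 0 ≠ s 1 := by
    intro hcontr
    have hd := segment_dist01 c w
    rw [show (fun t : ℝ => c + (2 * t - 1) • w) = s from rfl, hcontr, dist_self] at hd
    linarith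
  have hvar := segment_variation c w
  refine ⟨s, hcont, hball, hne, ?_, ?_⟩
  · rw [hvar]; exact ENNReal.ofReal_ne_top
  · rw [hvar, ENNReal.toReal_ofReal (by positivity), segment_dist01 c w]
    ring_nf

variable {α : Type*}

lemma biSup_le_of {A : Set α} {f : α → ℝ} {M : ℝ} (hM : 0 ≤ M) (h : ∀ z ∈ A, f z ≤ M) :
    (⨆ z ∈ A, f z) ≤ M :=
  Real.iSup_le (fun z => Real.iSup_le (fun hz => h z hz) hM) hM

lemma biSup_nonneg {A : Set α} {f : α → ℝ} (h : ∀ z, 0 ≤ f z) : 0 ≤ ⨆ z ∈ A, f z :=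
  Real.iSup_nonneg fun z => Real.iSup_nonneg fun _ => h z

lemma le_biSup' {A : Set α} {f : α → ℝ} {M : ℝ} (hM : ∀ z ∈ A, f z ≤ M) {z : α} (hz : z ∈ A) :
    f z ≤ ⨆ z ∈ A, f z := by
  have hbdd : BddAbove (range fun z => ⨆ _ : z ∈ A, f z) := by
    refine ⟨max M 0, ?_⟩
    rintro y ⟨z', rfl⟩
    exact Real.iSup_le (fun hz' => le_max_of_le_left (hM z' hz')) (le_max_right _ _)
  refine le_ciSup_of_le hbdd z ?_
  haveI : Nonempty (z ∈ A) := ⟨hz⟩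
  rw [ciSup_const]

variable {H : Type*} [NormedAddCommGroup H] [InnerProductSpace ℝ H]

lemma betaPrimeSet_nonneg {X : Set H} {x : H} {r : ℝ} {b : ℝ} (hb : b ∈ betaPrimeSet X x r) :
    0 ≤ b := by
  obtain ⟨s, _, _, hne, hfin, rfl⟩ := hb
  have hd : 0 < dist (s 0) (s 1) := dist_pos.mpr hne
  have hld : dist (s 0) (s 1) ≤ (eVariationOn s (Icc 0 1)).toReal := by
    rw [dist_edist]
    exact ENNReal.toReal_mono hfin
      (eVariationOn.edist_le s (by norm_num : (0:ℝ) ∈ Icc (0:ℝ) 1)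
        (by norm_num : (1:ℝ) ∈ Icc (0:ℝ) 1))
  have hT : 0 ≤ ⨆ z ∈ X ∩ ball x r, infDist z (s '' Icc 0 1) :=
    biSup_nonneg fun z => infDist_nonneg
  apply div_nonneg _ hd.le
  linarith

lemma betaPrimeSet_bddBelow (X : Set H) (x : H) (r : ℝ) : BddBelow (betaPrimeSet X x r) :=
  ⟨0, fun _ hb => betaPrimeSet_nonneg hb⟩
lemma unit_smul_ne_zero {u : H} (hu : ‖u‖ = 1) {m : ℝ} (hm : 0 < m) : m • u ≠ 0 := by
  intro h
  rw [smul_eq_zero] at h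
  rcases h with h | h
  · exact absurd h (ne_of_gt hm)
  · rw [h, norm_zero] at hu; norm_num at hu

lemma norm_lt_of_sq_lt {a b : ℝ} (hb : 0 < b) (h0 : 0 ≤ a) (h : a^2 < b^2) : a < b := by
  nlinarith

/-- The diameter-segment step: betaPrime is at most `r/(2ρ)`. -/
lemma diam_step (X : Set H) (x : H) (r : ℝ) (hr : 0 < r) (u : H) (hu : ‖u‖ = 1)
    (ρ : ℝ) (hρ0 : 0 < ρ) (hρr : ρ < r) : betaPrime X x r ≤ r / (2 * ρ) := by
  have hw : ρ • u ≠ 0 := unit_smul_ne_zero hu hρ0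
  have hnw : ‖ρ • u‖ = ρ := by rw [norm_smul, hu, mul_one, Real.norm_eq_abs, abs_of_pos hρ0]
  have hball : ∀ t ∈ Icc (0:ℝ) 1, x + (2 * t - 1) • (ρ • u) ∈ ball x r := by
    intro t ht
    rw [mem_ball, dist_eq_norm]
    have h1 : x + (2 * t - 1) • (ρ • u) - x = (2 * t - 1) • (ρ • u) := by abel
    rw [h1, norm_smul, Real.norm_eq_abs, hnw]
    obtain ⟨ht0, ht1⟩ := ht
    have h2 : |2 * t - 1| ≤ 1 := by rw [abs_le]; constructor <;> linarith
    nlinarith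
  have hmem := segment_mem_betaPrimeSet X x r x (ρ • u) hw hball
  have hxmem : x ∈ (fun t : ℝ => x + (2 * t - 1) • (ρ • u)) '' Icc 0 1 := by
    refine ⟨1/2, by norm_num, ?_⟩
    norm_num
  have hT : (⨆ z ∈ X ∩ ball x r,
      infDist z ((fun t : ℝ => x + (2 * t - 1) • (ρ • u)) '' Icc 0 1)) ≤ r :=
    biSup_le_of hr.le fun z hz =>
      le_trans (infDist_le_dist_of_mem hxmem) (le_of_lt (mem_ball.mp hz.2))
  refine le_trans (csInf_le (betaPrimeSet_bddBelow X x r) hmem) ?_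
  rw [hnw]
  gcongr
set_option maxHeartbeats 1600000 in
/-- The chord step: if the line through `q` with unit direction `u` (with `x - q ⊥ u`,
`‖x - q‖ < r/2`) has all points of `X ∩ ball x r` within distance `S` of it, then
`betaPrime` is bounded by the chord estimate. -/
lemma chord_step (X : Set H) (x : H) (r : ℝ) (hr : 0 < r) (u q : H) (hu : ‖u‖ = 1)
    (hperp : ⟪x - q, u⟫ = 0) (hd0r : ‖x - q‖ < r / 2) (S : ℝ) (hS0 : 0 ≤ S)
    (hzS : ∀ z ∈ X ∩ ball x r, ‖z - q - ⟪z - q, u⟫ • u‖ ≤ S)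
    (ρ : ℝ) (hρ1 : r / 2 < ρ) (hρ2 : ρ < r) :
    betaPrime X x r ≤ (S + (r - Real.sqrt (ρ^2 - ‖x - q‖^2))) /
      (2 * Real.sqrt (ρ^2 - ‖x - q‖^2)) := by
  have hd00 : 0 ≤ ‖x - q‖ := norm_nonneg _
  have hρ0 : 0 < ρ := lt_trans (by linarith) hρ1
  have hd0ρ : ‖x - q‖ < ρ := lt_trans hd0r hρ1
  have hpos : 0 < ρ^2 - ‖x - q‖^2 := by nlinarith
  set m : ℝ := Real.sqrt (ρ^2 - ‖x - q‖^2) with hm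
  have hm2 : m^2 = ρ^2 - ‖x - q‖^2 := Real.sq_sqrt hpos.le
  have hm0 : 0 < m := Real.sqrt_pos.mpr hpos
  have hmρ : m ≤ ρ := by nlinarith
  have hmr : m < r := lt_of_le_of_lt hmρ hρ2
  have hw : m • u ≠ 0 := unit_smul_ne_zero hu hm0
  have hnw : ‖m • u‖ = m := by rw [norm_smul, hu, mul_one, Real.norm_eq_abs, abs_of_pos hm0]
  have hball : ∀ t ∈ Icc (0:ℝ) 1, q + (2 * t - 1) • (m • u) ∈ ball x r := by
    intro t ht
    rw [mem_ball, dist_eq_norm]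
    have hsplit : q + (2 * t - 1) • (m • u) - x = -(x - q) + ((2*t-1)*m) • u := by
      rw [smul_smul]; abel_nf
    have hnormsq : ‖q + (2 * t - 1) • (m • u) - x‖^2 = ‖x - q‖^2 + ((2*t-1)*m)^2 := by
      rw [hsplit, norm_add_sq_real, inner_smul_right, inner_neg_left, hperp,
        norm_neg, norm_smul, Real.norm_eq_abs, hu, mul_one, sq_abs]
      ring
    have h2t : (2*t-1)^2 ≤ 1 := by obtain ⟨ht0, ht1⟩ := ht; nlinarith
    apply norm_lt_of_sq_lt hr (norm_nonneg _)
    rw [hnormsq]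
    nlinarith
  have hmem := segment_mem_betaPrimeSet X x r q (m • u) hw hball
  have hT : (⨆ z ∈ X ∩ ball x r,
      infDist z ((fun t : ℝ => q + (2 * t - 1) • (m • u)) '' Icc 0 1)) ≤ S + (r - m) := by
    apply biSup_le_of (by linarith)
    intro z hz
    have hzS' := hzS z hz
    have hαzr : |⟪z - q, u⟫| ≤ r := by
      have hzq : z - q = (z - x) + (x - q) := by abel
      have h1 : ⟪z - q, u⟫ = ⟪z - x, u⟫ := by rw [hzq, inner_add_left, hperp, add_zero]
      rw [h1]
      refine le_trans (abs_real_inner_le_norm _ _) ?_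
      rw [hu, mul_one, ← dist_eq_norm]
      exact le_of_lt (mem_ball.mp hz.2)
    set αz : ℝ := ⟪z - q, u⟫ with hαz
    set τ : ℝ := max (-1) (min 1 (αz / m)) with hτ
    have hτ1 : -1 ≤ τ := le_max_left _ _
    have hτ2 : τ ≤ 1 := max_le (by norm_num) (min_le_left _ _)
    have htmem : (τ + 1)/2 ∈ Icc (0:ℝ) 1 := ⟨by linarith, by linarith⟩
    have hy0 : q + (2 * ((τ + 1)/2) - 1) • (m • u) = q + (τ * m) • u := by
      rw [smul_smul]; ring_nf
    have hy0mem : q + (τ * m) • u ∈ (fun t : ℝ => q + (2 * t - 1) • (m • u)) '' Icc 0 1 :=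
      ⟨(τ + 1)/2, htmem, hy0⟩
    have htriangle : dist z (q + (τ * m) • u) ≤ ‖z - q - αz • u‖ + |αz - τ * m| := by
      rw [dist_eq_norm]
      have h2 : z - (q + (τ * m) • u) = (z - q - αz • u) + (αz - τ * m) • u := by module
      rw [h2]
      refine le_trans (norm_add_le _ _) ?_
      rw [norm_smul, Real.norm_eq_abs, hu, mul_one]
    have hclamp : |αz - τ * m| ≤ r - m := by
      rcases le_or_gt (αz / m) (-1) with h1 | h1
      · have hτval : τ = -1 := by
          rw [hτ, min_eq_right (le_trans h1 (by norm_num)), max_eq_left h1]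
        have hαzm : αz ≤ -m := by rw [div_le_iff₀ hm0] at h1; linarith
        rw [hτval]
        rw [abs_of_nonpos (by linarith)]
        nlinarith [abs_le.mp hαzr]
      · rcases le_or_gt (αz / m) 1 with h2 | h2
        · have hτval : τ = αz / m := by rw [hτ, min_eq_right h2, max_eq_right h1.le]
          rw [hτval, div_mul_cancel₀ _ (ne_of_gt hm0), sub_self, abs_zero]
          linarith
        · have hτval : τ = 1 := by rw [hτ, min_eq_left h2.le, max_eq_right (by norm_num)]
          have hαzm : m ≤ αz := by rw [lt_div_iff₀ hm0] at h2; linarith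
          rw [hτval, one_mul, abs_of_nonneg (by linarith)]
          nlinarith [abs_le.mp hαzr]
    calc infDist z ((fun t : ℝ => q + (2 * t - 1) • (m • u)) '' Icc 0 1)
        ≤ dist z (q + (τ * m) • u) := infDist_le_dist_of_mem hy0mem
      _ ≤ ‖z - q - αz • u‖ + |αz - τ * m| := htriangle
      _ ≤ S + (r - m) := add_le_add hzS' hclamp
  refine le_trans (csInf_le (betaPrimeSet_bddBelow X x r) hmem) ?_
  rw [hnw]
  gcongr
set_option maxHeartbeats 1600000 in
lemma betaPrime_le_jones_elem (X : Set H) (x : H) (hx : x ∈ X) (r : ℝ) (hr : 0 < r)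
    {B : ℝ} (hB : B ∈ jonesBetaSet X x r) : betaPrime X x r ≤ B := by
  obtain ⟨p, v, hv, rfl⟩ := hB
  have hxA : x ∈ X ∩ ball x r := ⟨hx, mem_ball_self hr⟩
  have hnv : ‖v‖ ≠ 0 := norm_ne_zero_iff.mpr hv
  have hu : ‖(‖v‖⁻¹ • v : H)‖ = 1 := by rw [norm_smul, norm_inv, norm_norm]; field_simp
  rw [lineSet_unit p v hv]
  set u : H := ‖v‖⁻¹ • v with hu_def
  clear_value u
  clear hu_def hnv hv
  set L := {y : H | ∃ t : ℝ, y = p + t • u} with hL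
  set S := ⨆ z ∈ X ∩ ball x r, infDist z L with hS
  clear_value S
  have hS0 : 0 ≤ S := by
    rw [hS]; exact biSup_nonneg fun z => infDist_nonneg
  have hMline : ∀ z ∈ X ∩ ball x r, infDist z L ≤ infDist x L + r := by
    intro z hz
    refine le_trans (infDist_le_infDist_add_dist (s := L) (x := z) (y := x)) ?_
    have : dist z x ≤ r := le_of_lt (mem_ball.mp hz.2)
    linarith
  have hd0S : infDist x L ≤ S := by rw [hS]; exact le_biSup' hMline hxA
  by_cases hcase : S < r / 2
  · -- chord case
    have huu : ⟪u, u⟫ = (1:ℝ) := by rw [real_inner_self_eq_norm_sq, hu]; norm_num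
    set q : H := p + ⟪x - p, u⟫ • u with hq
    have hxq : x - q = x - p - ⟪x - p, u⟫ • u := by rw [hq]; abel
    have hd0eq : infDist x L = ‖x - q‖ := by rw [hL, infDist_line_eq p u x hu, hxq]
    have hLq : L = {y : H | ∃ t : ℝ, y = q + t • u} := by rw [hL, hq]; exact lineSet_shift p u _
    have hperp : ⟪x - q, u⟫ = 0 := by
      rw [hxq, inner_sub_left, inner_sub_left, real_inner_smul_left, huu]
      ring
    have hd0r : ‖x - q‖ < r / 2 := by rw [← hd0eq]; exact lt_of_le_of_lt hd0S hcase
    have hzS : ∀ z ∈ X ∩ ball x r, ‖z - q - ⟪z - q, u⟫ • u‖ ≤ S := by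
      intro z hz
      have h1 : infDist z L = ‖z - q - ⟪z - q, u⟫ • u‖ := by
        rw [hLq]; exact infDist_line_eq q u z hu
      rw [← h1, hS]; exact le_biSup' hMline hz
    have hstep : ∀ ρ ∈ Ioo (r/2) r, betaPrime X x r ≤
        (S + (r - Real.sqrt (ρ^2 - ‖x - q‖^2))) / (2 * Real.sqrt (ρ^2 - ‖x - q‖^2)) :=
      fun ρ hρ => chord_step X x r hr u q hu hperp hd0r S hS0 hzS ρ hρ.1 hρ.2
    -- take the limit ρ → r
    set d0 : ℝ := ‖x - q‖ with hd0
    have hd00 : 0 ≤ d0 := norm_nonneg _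
    have hd0r' : d0 < r / 2 := hd0r
    have hpos : 0 < r^2 - d0^2 := by nlinarith
    have hms_pos : 0 < Real.sqrt (r^2 - d0^2) := Real.sqrt_pos.mpr hpos
    have hgcont : ContinuousAt
        (fun ρ : ℝ => (S + (r - Real.sqrt (ρ^2 - d0^2))) / (2 * Real.sqrt (ρ^2 - d0^2))) r := by
      have hsq : Continuous fun ρ : ℝ => Real.sqrt (ρ^2 - d0^2) :=
        Real.continuous_sqrt.comp (by continuity)
      exact ContinuousAt.div
        ((continuous_const.add (continuous_const.sub hsq)).continuousAt)
        ((continuous_const.mul hsq).continuousAt)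
        (ne_of_gt (by positivity))
    have htend := hgcont.continuousWithinAt (s := Iio r)
    have hev : ∀ᶠ ρ in nhdsWithin r (Iio r), betaPrime X x r ≤
        (S + (r - Real.sqrt (ρ^2 - d0^2))) / (2 * Real.sqrt (ρ^2 - d0^2)) :=
      Filter.eventually_of_mem (Ioo_mem_nhdsLT_of_mem ⟨by linarith, le_refl r⟩) hstep
    have hlim : betaPrime X x r ≤
        (S + (r - Real.sqrt (r^2 - d0^2))) / (2 * Real.sqrt (r^2 - d0^2)) :=
      ge_of_tendsto htend hev
    refine le_trans hlim ?_
    set ms : ℝ := Real.sqrt (r^2 - d0^2) with hms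
    have hms2 : ms^2 = r^2 - d0^2 := Real.sq_sqrt hpos.le
    have hmsr : ms ≤ r := by nlinarith
    have hd0S' : d0 ≤ S := hd0eq ▸ hd0S
    rw [div_le_div_iff₀ (by positivity) hr]
    nlinarith [mul_nonneg hS0 hms_pos.le, sq_nonneg (ms - r), sq_nonneg S,
      mul_le_mul hd0S' hd0S' hd00 hS0]
  · -- big S case
    push_neg at hcase
    have hhalf : 1 / 2 ≤ S / r := by rw [div_le_div_iff₀ (by norm_num) hr]; linarith
    refine le_trans ?_ hhalf
    have hgcont : ContinuousAt (fun ρ : ℝ => r / (2 * ρ)) r :=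
      ContinuousAt.div continuousAt_const (by fun_prop) (ne_of_gt (by positivity))
    have htend := hgcont.continuousWithinAt (s := Iio r)
    have hev : ∀ᶠ ρ in nhdsWithin r (Iio r), betaPrime X x r ≤ r / (2 * ρ) :=
      Filter.eventually_of_mem (Ioo_mem_nhdsLT_of_mem ⟨hr, le_refl r⟩)
        (fun ρ hρ => diam_step X x r hr u hu ρ hρ.1 hρ.2)
    have hlim : betaPrime X x r ≤ r / (2 * r) := ge_of_tendsto htend hev
    refine le_trans hlim (le_of_eq ?_)
    field_simp
lemma jonesBetaSet_nonneg {X : Set H} {x : H} {r : ℝ} (hr : 0 < r) {B : ℝ}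
    (hB : B ∈ jonesBetaSet X x r) : 0 ≤ B := by
  obtain ⟨p, v, hv, rfl⟩ := hB
  exact div_nonneg (biSup_nonneg fun z => infDist_nonneg) hr.le

lemma jonesBeta_le_one {X : Set H} {x : H} (hx : x ∈ X) {r : ℝ} (hr : 0 < r)
    {v : H} (hv : v ≠ 0) : jonesBeta X x r ≤ 1 := by
  have hmem : (⨆ z ∈ X ∩ ball x r, infDist z {y : H | ∃ t : ℝ, y = x + t • v}) / r
      ∈ jonesBetaSet X x r := ⟨x, v, hv, rfl⟩
  have hxL : x ∈ {y : H | ∃ t : ℝ, y = x + t • v} := ⟨0, by simp⟩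
  have hsup : (⨆ z ∈ X ∩ ball x r, infDist z {y : H | ∃ t : ℝ, y = x + t • v}) ≤ r := by
    apply biSup_le_of hr.le
    intro z hz
    exact le_trans (infDist_le_dist_of_mem hxL) (le_of_lt (mem_ball.mp hz.2))
  refine le_trans (csInf_le ⟨0, fun B hB => jonesBetaSet_nonneg hr hB⟩ hmem) ?_
  rw [div_le_one hr]
  exact hsup

set_option maxHeartbeats 1600000 in
lemma jones_le_elem (X : Set H) (x : H) (hx : x ∈ X) (r : ℝ) (hr : 0 < r)
    {b : ℝ} (hb : b ∈ betaPrimeSet X x r) :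
    jonesBeta X x r ≤ (2 + Real.sqrt 3) * Real.sqrt b := by
  have hb0 : 0 ≤ b := betaPrimeSet_nonneg hb
  have hsqrt3 : (1:ℝ) ≤ 2 + Real.sqrt 3 := by
    have := Real.sqrt_nonneg 3; linarith
  rcases le_or_gt b 1 with hble | hbgt
  swap
  · -- b > 1 : use jonesBeta ≤ 1
    obtain ⟨s, _, _, hne, _, _⟩ := hb
    have hv : s 1 - s 0 ≠ 0 := sub_ne_zero.mpr (Ne.symm hne)
    refine le_trans (jonesBeta_le_one hx hr hv) ?_
    have h1b : 1 ≤ Real.sqrt b := by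
      rw [show (1:ℝ) = Real.sqrt 1 from (Real.sqrt_one).symm]
      exact Real.sqrt_le_sqrt hbgt.le
    nlinarith [Real.sqrt_nonneg b, Real.sqrt_nonneg 3]
  -- main case b ≤ 1
  obtain ⟨s, hcont, hball, hne, hfin, hbeq⟩ := hb
  have h01 : (0:ℝ) ∈ Icc (0:ℝ) 1 := by norm_num
  have h11 : (1:ℝ) ∈ Icc (0:ℝ) 1 := by norm_num
  have hv : s 1 - s 0 ≠ 0 := sub_ne_zero.mpr (Ne.symm hne)
  have hd : 0 < dist (s 0) (s 1) := dist_pos.mpr hne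
  set d : ℝ := dist (s 0) (s 1) with hd_def
  set ℓr : ℝ := (eVariationOn s (Icc 0 1)).toReal with hℓ
  have hld : d ≤ ℓr := by
    rw [hd_def, dist_edist]
    exact ENNReal.toReal_mono hfin (eVariationOn.edist_le s h01 h11)
  have hsum : ∀ t ∈ Icc (0:ℝ) 1, dist (s 0) (s t) + dist (s t) (s 1) ≤ ℓr := by
    intro t ht
    have hsplit := eVariationOn.Icc_add_Icc s ht.1 ht.2 ht
    have h0t : edist (s 0) (s t) ≤ eVariationOn s (Icc 0 1 ∩ Icc 0 t) :=
      eVariationOn.edist_le s ⟨h01, le_refl 0, ht.1⟩ ⟨ht, ht.1, le_refl t⟩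
    have ht1 : edist (s t) (s 1) ≤ eVariationOn s (Icc 0 1 ∩ Icc t 1) :=
      eVariationOn.edist_le s ⟨ht, le_refl t, ht.2⟩ ⟨h11, ht.2, le_refl 1⟩
    have hmain : edist (s 0) (s t) + edist (s t) (s 1) ≤ eVariationOn s (Icc 0 1) := by
      refine le_trans (add_le_add h0t ht1) ?_
      rw [hsplit]
      exact eVariationOn.mono s inter_subset_left
    have := ENNReal.toReal_mono hfin hmain
    rw [ENNReal.toReal_add (edist_ne_top _ _) (edist_ne_top _ _)] at this
    rw [dist_edist, dist_edist]
    exact this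
  set M : ℝ := Real.sqrt (ℓr^2 - d^2) / 2 with hM
  have hM0 : 0 ≤ M := by rw [hM]; positivity
  have hMt : ∀ t ∈ Icc (0:ℝ) 1, infDist (s t)
      {y : H | ∃ τ : ℝ, y = s 0 + τ • (s 1 - s 0)} ≤ M := by
    intro t ht
    refine le_trans (ellipse_est (s 0) (s 1) (s t) hne) ?_
    rw [hM]
    gcongr
    have h1 := hsum t ht
    have h2 : 0 ≤ dist (s 0) (s t) + dist (s t) (s 1) := by positivity
    nlinarith [dist_nonneg (x := s 0) (y := s t)]
  set L : Set H := {y : H | ∃ τ : ℝ, y = s 0 + τ • (s 1 - s 0)} with hLdef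
  set T : ℝ := ⨆ z ∈ X ∩ ball x r, infDist z (s '' Icc 0 1) with hT
  have hT0 : 0 ≤ T := biSup_nonneg fun z => infDist_nonneg
  have himg_bd : ∀ z ∈ X ∩ ball x r, infDist z (s '' Icc 0 1) ≤ 2 * r := by
    intro z hz
    have hs0 : s 0 ∈ s '' Icc 0 1 := ⟨0, h01, rfl⟩
    refine le_trans (infDist_le_dist_of_mem hs0) ?_
    have h1 : dist z x < r := mem_ball.mp hz.2
    have h2 : dist (s 0) x < r := mem_ball.mp (hball 0 h01)
    calc dist z (s 0) ≤ dist z x + dist x (s 0) := dist_triangle _ _ _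
      _ ≤ 2 * r := by rw [dist_comm x (s 0)]; linarith
  have hzL : ∀ z ∈ X ∩ ball x r, infDist z L ≤ T + M := by
    intro z hz
    have himg_ne : (s '' Icc 0 1).Nonempty := ⟨s 0, 0, h01, rfl⟩
    have hle : infDist z L - M ≤ infDist z (s '' Icc 0 1) := by
      haveI : Nonempty (s '' Icc 0 1) := himg_ne.to_subtype
      conv_rhs => rw [infDist_eq_iInf]
      apply le_ciInf
      rintro ⟨y, t, ht, rfl⟩
      have h1 : infDist z L ≤ infDist (s t) L + dist z (s t) :=
        infDist_le_infDist_add_dist (s := L) (x := z) (y := s t)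
      have h2 := hMt t ht
      have h3 : infDist z L - M ≤ dist z (s t) := by linarith
      simpa using h3
    have h3 : infDist z (s '' Icc 0 1) ≤ T := by
      rw [hT]; exact le_biSup' himg_bd hz
    linarith
  have hSL : (⨆ z ∈ X ∩ ball x r, infDist z L) ≤ T + M :=
    biSup_le_of (by linarith) hzL
  have hjmem : (⨆ z ∈ X ∩ ball x r, infDist z L) / r ∈ jonesBetaSet X x r :=
    ⟨s 0, s 1 - s 0, hv, rfl⟩
  have hjB : jonesBeta X x r ≤ (T + M) / r := by
    refine le_trans (csInf_le ⟨0, fun B hB => jonesBetaSet_nonneg hr hB⟩ hjmem) ?_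
    gcongr
  -- arithmetic
  have hbd : ℓr - d + T = b * d := by
    have : b = (ℓr - d + T) / d := hbeq
    field_simp at this
    linarith
  have hTle : T ≤ b * d := by linarith
  have hΔle : ℓr - d ≤ b * d := by linarith
  have hd2r : d ≤ 2 * r := by
    have h1 : dist (s 0) x < r := mem_ball.mp (hball 0 h01)
    have h2 : dist (s 1) x < r := mem_ball.mp (hball 1 h11)
    calc d ≤ dist (s 0) x + dist x (s 1) := dist_triangle _ _ _
      _ ≤ 2 * r := by rw [dist_comm x (s 1)]; linarith
  have hM_le : M ≤ d * Real.sqrt (b^2 + 2*b) / 2 := by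
    rw [hM]
    have h1 : ℓr^2 - d^2 ≤ d^2 * (b^2 + 2*b) := by nlinarith
    have h2 : Real.sqrt (ℓr^2 - d^2) ≤ Real.sqrt (d^2 * (b^2 + 2*b)) := Real.sqrt_le_sqrt h1
    have h3 : Real.sqrt (d^2 * (b^2 + 2*b)) = d * Real.sqrt (b^2 + 2*b) := by
      rw [Real.sqrt_mul (sq_nonneg d), Real.sqrt_sq hd.le]
    linarith
  have hfinal : (T + M) / r ≤ 2*b + Real.sqrt (b^2 + 2*b) := by
    rw [div_le_iff₀ hr]
    have hsq0 : 0 ≤ Real.sqrt (b^2 + 2*b) := Real.sqrt_nonneg _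
    calc T + M ≤ b * d + d * Real.sqrt (b^2 + 2*b) / 2 := add_le_add hTle hM_le
      _ ≤ b * (2*r) + (2*r) * Real.sqrt (b^2 + 2*b) / 2 := by
          gcongr
      _ = (2*b + Real.sqrt (b^2 + 2*b)) * r := by ring
  have hbound : jonesBeta X x r ≤ 2*b + Real.sqrt (b^2 + 2*b) := le_trans hjB hfinal
  -- now compare with (2 + √3)√b
  have hsb : b ≤ Real.sqrt b := by
    nlinarith [Real.sq_sqrt hb0, Real.sqrt_nonneg b]
  have h3b : Real.sqrt (b^2 + 2*b) ≤ Real.sqrt 3 * Real.sqrt b := by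
    rw [← Real.sqrt_mul (by norm_num : (0:ℝ) ≤ 3)]
    apply Real.sqrt_le_sqrt
    nlinarith
  calc jonesBeta X x r ≤ 2*b + Real.sqrt (b^2 + 2*b) := hbound
    _ ≤ 2 * Real.sqrt b + Real.sqrt 3 * Real.sqrt b := by linarith
    _ = (2 + Real.sqrt 3) * Real.sqrt b := by ring

end Helpers

/-- **Proposition.** In a real Hilbert space, `β'_X(x,r) ≤ β_X(x,r) ≤ C·β'_X(x,r)^{1/2}` for a
universal constant `C > 0`, whenever `X` is compact connected, `x ∈ X`, `0 < r < diam X / 2`. -/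
theorem betaPrime_le_jonesBeta_le_sqrt_betaPrime :
    ∃ C : ℝ, 0 < C ∧
      ∀ (H : Type*) [NormedAddCommGroup H] [InnerProductSpace ℝ H] [CompleteSpace H],
        ∀ X : Set H, IsCompact X → IsConnected X →
          ∀ x ∈ X, ∀ r : ℝ, 0 < r → r < Metric.diam X / 2 →
            betaPrime X x r ≤ jonesBeta X x r ∧
            jonesBeta X x r ≤ C * Real.sqrt (betaPrime X x r) := by
  have hsqrt3 : (0:ℝ) ≤ Real.sqrt 3 := Real.sqrt_nonneg 3
  refine ⟨2 + Real.sqrt 3, by linarith, ?_⟩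
  intro H _ _ _ X hXcomp hXconn x hxX r hr hrdiam
  have hdiam : 0 < Metric.diam X := by linarith
  obtain ⟨y₁, hy₁, y₂, hy₂, hy12⟩ : ∃ y₁ ∈ X, ∃ y₂ ∈ X, y₁ ≠ y₂ := by
    by_contra hcon
    push_neg at hcon
    have : Metric.diam X ≤ 0 := Metric.diam_le_of_forall_dist_le le_rfl
      (fun a ha b hb => by rw [hcon a ha b hb, dist_self])
    linarith
  have hv₀ : y₂ - y₁ ≠ 0 := sub_ne_zero.mpr (Ne.symm hy12)
  have hnv₀ : ‖y₂ - y₁‖ ≠ 0 := norm_ne_zero_iff.mpr hv₀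
  have hu₀ : ‖(‖y₂ - y₁‖⁻¹ • (y₂ - y₁) : H)‖ = 1 := by
    rw [norm_smul, norm_inv, norm_norm]; field_simp
  have hne : (betaPrimeSet X x r).Nonempty := by
    refine ⟨_, segment_mem_betaPrimeSet X x r x ((r/2) • (‖y₂ - y₁‖⁻¹ • (y₂ - y₁))) ?_ ?_⟩
    · exact unit_smul_ne_zero hu₀ (by positivity)
    · intro t ht
      rw [mem_ball, dist_eq_norm]
      have h1 : x + (2 * t - 1) • ((r/2) • (‖y₂ - y₁‖⁻¹ • (y₂ - y₁))) - x
          = (2 * t - 1) • ((r/2) • (‖y₂ - y₁‖⁻¹ • (y₂ - y₁))) := by abel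
      rw [h1, norm_smul, norm_smul, hu₀, mul_one, Real.norm_eq_abs, Real.norm_eq_abs,
        abs_of_pos (by positivity : (0:ℝ) < r/2)]
      obtain ⟨ht0, ht1⟩ := ht
      have h2 : |2 * t - 1| ≤ 1 := by rw [abs_le]; constructor <;> linarith
      nlinarith
  have hjne : (jonesBetaSet X x r).Nonempty := ⟨_, x, y₂ - y₁, hv₀, rfl⟩
  constructor
  · exact le_csInf hjne fun B hB => betaPrime_le_jones_elem X x hxX r hr hB
  · have hj0 : 0 ≤ jonesBeta X x r :=
      Real.sInf_nonneg fun B hB => jonesBetaSet_nonneg hr hB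
    have hC : (0:ℝ) < 2 + Real.sqrt 3 := by linarith
    have hkey : ∀ b ∈ betaPrimeSet X x r, (jonesBeta X x r / (2 + Real.sqrt 3))^2 ≤ b := by
      intro b hb
      have h1 := jones_le_elem X x hxX r hr hb
      have hb0 := betaPrimeSet_nonneg hb
      have h2 : jonesBeta X x r / (2 + Real.sqrt 3) ≤ Real.sqrt b := by
        rw [div_le_iff₀ hC, mul_comm]; exact h1
      calc (jonesBeta X x r / (2 + Real.sqrt 3))^2 ≤ (Real.sqrt b)^2 :=
            pow_le_pow_left₀ (by positivity) h2 2
        _ = b := Real.sq_sqrt hb0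
    have h3 : (jonesBeta X x r / (2 + Real.sqrt 3))^2 ≤ betaPrime X x r := le_csInf hne hkey
    have h4 : jonesBeta X x r / (2 + Real.sqrt 3) ≤ Real.sqrt (betaPrime X x r) := by
      have h5 := Real.sqrt_le_sqrt h3
      rwa [Real.sqrt_sq (by positivity)] at h5
    rw [div_le_iff₀ hC] at h4
    rwa [mul_comm] at h4
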